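/- Pimsner-Popa expectation formula: Assume depth 2, so that the family (λᵢ) ⊆ A₋₁,₀ with μ₀(λᵢ* λⱼ) = δᵢⱼ is a Pimsner–Popa basis for E₀ : M → N, i.e., Σᵢ λᵢ e₁ λᵢ* = 1. Define E₁(a) = w₀* γ(a) w₀ for a ∈ M₁, where w₀ = Σᵢ γ(λᵢ) w₋₁ λᵢ*. Then E₁(m e₁ m*) = m m* for every m that is a finite linear combination m = Σₗ λₗ nₗ with nₗ ∈ N. -/
import Mathlib


/-- Pimsner–Popa expectation formula: Assume depth 2, so that the
orthonormal family `(λᵢ) ⊆ A₋₁,₀` is a Pimsner–Popa basis for `E₀ : M → N`,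
i.e. `Σᵢ λᵢ e₁ λᵢ* = 1`.  With `w₀ = Σᵢ γ(λᵢ) w₋₁ λᵢ*` and
`E₁(a) = w₀* γ(a) w₀`, one has `E₁(m e₁ m*) = m m*` for every finite linear
combination `m = Σₗ λₗ nₗ` with `nₗ ∈ N`.
(`wm1 = w₋₁`, `w1 = w₁`, `lam i = λᵢ`.) -/
theorem pimsner_popa_expectation_formula
    {B : Type*} [Ring B] [StarRing B] [Algebra ℂ B] [StarModule ℂ B]
    (M N : StarSubalgebra ℂ B) (hNM : N ≤ M)
    (γ : B →⋆ₐ[ℂ] B) (hγM : ∀ m ∈ M, γ m ∈ N)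
    (wm1 w1 : B) (hwN : wm1 ∈ N) (hiso : star wm1 * wm1 = 1)
    (hintN : ∀ n ∈ N, wm1 * n = γ n * wm1)
    (hγw1 : γ w1 = wm1) (hiso1 : star w1 * w1 = 1)
    (hintM : ∀ m ∈ M, w1 * m = γ m * w1)
    {ι : Type*} [Fintype ι] [DecidableEq ι] (lam : ι → B)
    (hlamA : ∀ i, lam i ∈ M ∧ ∀ m ∈ M, lam i * γ m = γ m * lam i)
    (hON : ∀ i j, star wm1 * (star (lam i) * lam j) * wm1
      = (if i = j then (1 : ℂ) else 0) • (1 : B))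
    (e1 : B) (he1 : e1 = w1 * star w1)
    (hPP : ∑ i, lam i * e1 * star (lam i) = 1)
    (w0 : B) (hw0 : w0 = ∑ i, γ (lam i) * wm1 * star (lam i))
    (hw0int : ∀ m ∈ M, w0 * m = γ m * w0)
    (hw0norm1 : star wm1 * w0 = 1) (hw0norm2 : star w1 * w0 = 1)
    (n : ι → B) (hn : ∀ i, n i ∈ N) :
    star w0 * γ ((∑ i, lam i * n i) * e1 * star (∑ i, lam i * n i)) * w0
      = (∑ i, lam i * n i) * star (∑ i, lam i * n i) := by
  set m := ∑ i, lam i * n i with hm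
  have hmM : m ∈ M := sum_mem fun i _ => mul_mem (hlamA i).1 (hNM (hn i))
  have hsmM : star m ∈ M := star_mem hmM
  have h1 : γ (star m) * w0 = w0 * star m := (hw0int _ hsmM).symm
  have h2 : star w0 * γ m = m * star w0 := by
    have h := congrArg star (hw0int _ hsmM)
    simp only [star_mul, star_star, ← map_star] at h
    exact h.symm
  have hsw : star w0 * wm1 = 1 := by
    have := congrArg star hw0norm1
    simpa using this
  have hγe1 : γ e1 = wm1 * star wm1 := by
    rw [he1, map_mul, map_star, hγw1]
  calc star w0 * γ (m * e1 * star m) * w0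
      = (star w0 * γ m) * (wm1 * (star wm1 * (γ (star m) * w0))) := by
        simp only [map_mul, hγe1, mul_assoc]
    _ = m * star m := by
        rw [h1, ← mul_assoc (star wm1), hw0norm1, one_mul, h2,
          mul_assoc m, ← mul_assoc (star w0), hsw, one_mul]
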